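/- The functor K̊ = k̊ ∘ U : Grp → Graph, where U : Grp → Set is the forgetful functor and k̊ sends a set to the complete graph with semiedges on it, is a right adjoint functor; in particular it preserves all limits. -/

import Mathlib

open CategoryTheory

structure SymGraph where
  V : Type
  D : Type
  s : D → V
  t : D → V
  inv : D → D
  inv_inv : ∀ d, inv (inv d) = d
  s_inv : ∀ d, s (inv d) = t d

@[ext]
structure GraphHom (G H : SymGraph) where
  fV : G.V → H.V
  fD : G.D → H.D
  map_s : ∀ d, H.s (fD d) = fV (G.s d)
  map_t : ∀ d, H.t (fD d) = fV (G.t d)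
  map_inv : ∀ d, H.inv (fD d) = fD (G.inv d)

instance : Category SymGraph where
  Hom := GraphHom
  id G := ⟨id, id, fun _ => rfl, fun _ => rfl, fun _ => rfl⟩
  comp f g := ⟨g.fV ∘ f.fV, g.fD ∘ f.fD,
    fun d => by simp [g.map_s, f.map_s],
    fun d => by simp [g.map_t, f.map_t],
    fun d => by simp [g.map_inv, f.map_inv]⟩

/-- The complete graph with semiedges on a set `X`. -/
def kGraph (X : Type) : SymGraph where
  V := X
  D := X × X
  s := fun p => p.1
  t := fun p => p.2
  inv := fun p => (p.2, p.1)
  inv_inv := fun _ => rfl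
  s_inv := fun _ => rfl

/-- The functor `k̊ : Set → Graph`. -/
def kFunctor : Type ⥤ SymGraph where
  obj := kGraph
  map f := ⟨f, fun p => (f p.1, f p.2), fun _ => rfl, fun _ => rfl, fun _ => rfl⟩

/-- The functor `K̊ = k̊ ∘ U : Grp → Graph`. -/
def KFunctor : GrpCat.{0} ⥤ SymGraph := forget GrpCat.{0} ⋙ kFunctor


/-- The vertex functor `Graph ⥤ Type`. -/
def VFunctor : SymGraph ⥤ Type where
  obj G := G.V
  map f := TypeCat.ofHom f.fV

def VkAdj : VFunctor ⊣ kFunctor :=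
  Adjunction.mkOfHomEquiv
    { homEquiv := fun G X =>
        { toFun := fun f =>
            ⟨f, fun d => (f (G.s d), f (G.t d)), fun _ => rfl, fun _ => rfl,
              fun d => by
                show (f (G.t d), f (G.s d)) = (f (G.s (G.inv d)), f (G.t (G.inv d)))
                have h1 : G.s (G.inv d) = G.t d := G.s_inv d
                have h2 : G.t (G.inv d) = G.s d := by
                  have := G.s_inv (G.inv d); rw [G.inv_inv] at this; exact this.symm
                rw [h1, h2]⟩
          invFun := fun φ => TypeCat.ofHom φ.fV
          left_inv := fun f => rfl
          right_inv := fun φ => GraphHom.ext rfl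
            (funext fun d => Prod.ext (φ.map_s d).symm (φ.map_t d).symm) }
      homEquiv_naturality_left_symm := fun _ _ => rfl
      homEquiv_naturality_right := fun _ _ => rfl }

def KAdj : (VFunctor ⋙ GrpCat.free.{0}) ⊣ KFunctor :=
  VkAdj.comp GrpCat.adj

/-- `K̊` is a right adjoint; in particular it preserves all limits. -/
theorem KFunctor_isRightAdjoint :
    KFunctor.IsRightAdjoint ∧ Nonempty (Limits.PreservesLimits KFunctor) := by
  exact ⟨⟨_, ⟨KAdj⟩⟩, ⟨KAdj.rightAdjoint_preservesLimits⟩⟩
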